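/- For any odd prime power q = r^2 that is a perfect square, and for any n with 2n ≤ r, for every k with 1 ≤ k ≤ n there exists an MDS LCD [n,k] code over F_q. -/

import Mathlib

/-- The Euclidean dual of a code `C ⊆ R^n`:
`C^⊥ = {x : x · c = 0 for all c ∈ C}` where `x · y = ∑ i, x i * y i`. -/
def dualCode {R : Type*} [CommRing R] {n : ℕ} (C : Submodule R (Fin n → R)) :
    Submodule R (Fin n → R) where
  carrier := {x | ∀ c ∈ C, ∑ i, x i * c i = 0}
  zero_mem' := by intro c hc; simp
  add_mem' := by
    intro a b ha hb c hc
    have h1 := ha c hc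
    have h2 := hb c hc
    simp only [Pi.add_apply, add_mul, Finset.sum_add_distrib, h1, h2, add_zero]
  smul_mem' := by
    intro r x hx c hc
    have h1 := hx c hc
    simp only [Pi.smul_apply, smul_eq_mul, mul_assoc, ← Finset.mul_sum, h1, mul_zero]

/-- A code is LCD (linear complementary dual) if `C ∩ C^⊥ = {0}`. -/
def IsLCD {R : Type*} [CommRing R] {n : ℕ} (C : Submodule R (Fin n → R)) : Prop :=
  C ⊓ dualCode C = ⊥

open Classical in
/-- The Hamming weight of a vector: the number of nonzero coordinates. -/
noncomputable def wt {R : Type*} [Zero R] {n : ℕ} (x : Fin n → R) : ℕ :=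
  (Finset.univ.filter fun i => x i ≠ 0).card

/-- `C` has minimum distance `d`: some nonzero codeword has weight `d`
and every nonzero codeword has weight at least `d`. -/
def hasMinDist {F : Type*} [Field F] {n : ℕ} (C : Submodule F (Fin n → F)) (d : ℕ) : Prop :=
  (∃ c ∈ C, c ≠ 0 ∧ wt c = d) ∧ ∀ c ∈ C, c ≠ 0 → d ≤ wt c



namespace MDSLCD

open Polynomial Finset

variable {F : Type*} [Field F]

/-- Lagrange weight. -/
noncomputable def lw {n : ℕ} (a : Fin n → F) (i : Fin n) : F :=
  (∏ j ∈ Finset.univ.erase i, (a i - a j))⁻¹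

variable {n : ℕ} {a : Fin n → F}

lemma prod_ne_zero (ha : Function.Injective a) (i : Fin n) :
    ∏ j ∈ Finset.univ.erase i, (a i - a j) ≠ 0 := by
  rw [Finset.prod_ne_zero_iff]
  intro j hj
  rw [Finset.mem_erase] at hj
  exact sub_ne_zero.mpr fun h => hj.1 (ha h).symm

lemma lw_ne_zero (ha : Function.Injective a) (i : Fin n) : lw a i ≠ 0 :=
  inv_ne_zero (prod_ne_zero ha i)

lemma lw_mul (ha : Function.Injective a) (i : Fin n) :
    lw a i * ∏ j ∈ Finset.univ.erase i, (a i - a j) = 1 :=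
  inv_mul_cancel₀ (prod_ne_zero ha i)

lemma moment (ha : Function.Injective a) (hn : 1 ≤ n) {t : ℕ} (ht : t ≤ n - 1) :
    ∑ i, lw a i * a i ^ t = if t = n - 1 then 1 else 0 := by
  classical
  set P : F[X] := ∑ i, Polynomial.C (a i ^ t * lw a i) *
      ∏ j ∈ Finset.univ.erase i, (Polynomial.X - Polynomial.C (a j)) with hPdef
  have hprodmonic : ∀ i : Fin n,
      ((∏ j ∈ Finset.univ.erase i, (Polynomial.X - Polynomial.C (a j))) : F[X]).Monic :=
    fun i => monic_prod_of_monic _ _ fun j _ => monic_X_sub_C (a j)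
  have hproddeg : ∀ i : Fin n,
      ((∏ j ∈ Finset.univ.erase i, (X - Polynomial.C (a j))) : F[X]).natDegree = n - 1 := by
    intro i
    rw [natDegree_prod _ _ fun j _ => X_sub_C_ne_zero (a j)]
    simp [natDegree_X_sub_C, Finset.card_erase_of_mem]
  have hPdeg : P.natDegree ≤ n - 1 := by
    apply natDegree_sum_le_of_forall_le
    intro i _
    exact le_trans (natDegree_C_mul_le _ _) (le_of_eq (hproddeg i))
  have hPX : P = X ^ t := by
    rw [← sub_eq_zero]
    apply Polynomial.eq_zero_of_natDegree_lt_card_of_eval_eq_zero _ ha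
    · intro m
      rw [eval_sub, eval_pow, eval_X]
      have hPe : P.eval (a m) = a m ^ t := by
        rw [hPdef, eval_finset_sum]
        rw [Finset.sum_eq_single m]
        · rw [eval_mul, eval_C, eval_prod]
          simp only [eval_sub, eval_X, eval_C]
          rw [mul_assoc, lw_mul ha m, mul_one]
        · intro i _ him
          rw [eval_mul, eval_prod]
          have hz : eval (a m) (X - Polynomial.C (a m)) = 0 := by simp
          rw [Finset.prod_eq_zero (Finset.mem_erase.mpr ⟨him.symm, Finset.mem_univ m⟩) hz,
            mul_zero]
        · simp
      rw [hPe, sub_self]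
    · have h1 : (P - X ^ t).natDegree ≤ max P.natDegree ((X : F[X]) ^ t).natDegree :=
        natDegree_sub_le _ _
      rw [natDegree_X_pow] at h1
      rw [Fintype.card_fin]
      omega
  rw [hPdef] at hPX
  have hco := congrArg (fun p : F[X] => p.coeff (n - 1)) hPX
  simp only [finset_sum_coeff, coeff_C_mul, coeff_X_pow] at hco
  have hc : ∀ i : Fin n,
      a i ^ t * lw a i *
        (∏ j ∈ Finset.univ.erase i, (X - Polynomial.C (a j))).coeff (n - 1) =
      a i ^ t * lw a i := by
    intro i
    have h2 := (hprodmonic i).coeff_natDegree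
    rw [hproddeg i] at h2
    rw [h2, mul_one]
  rw [Finset.sum_congr rfl fun i _ => hc i] at hco
  calc ∑ i, lw a i * a i ^ t = ∑ i, a i ^ t * lw a i := by
        exact Finset.sum_congr rfl fun i _ => mul_comm _ _
    _ = if t = n - 1 then 1 else 0 := by
        rw [hco]
        simp only [eq_comm]

end MDSLCD


namespace MDSLCD

open Polynomial Finset

variable {F : Type*} [Field F] {n : ℕ} {a : Fin n → F}

noncomputable def fpoly {k : ℕ} (lam : Fin k → F) : F[X] :=
  ∑ j : Fin k, Polynomial.C (lam j) * Polynomial.X ^ (j : ℕ)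

lemma fpoly_coeff {k : ℕ} (lam : Fin k → F) (j : Fin k) :
    (fpoly lam).coeff (j : ℕ) = lam j := by
  rw [fpoly, finset_sum_coeff]
  rw [Finset.sum_eq_single j]
  · simp
  · intro j' _ hj'
    simp only [coeff_C_mul, coeff_X_pow]
    rw [if_neg, mul_zero]
    exact fun h => hj' (Fin.ext h.symm)
  · simp

lemma fpoly_deg {k : ℕ} (lam : Fin k → F) : (fpoly lam).natDegree ≤ k - 1 := by
  apply natDegree_sum_le_of_forall_le
  intro j _
  refine le_trans (natDegree_C_mul_le _ _) ?_
  rw [natDegree_X_pow]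
  have := j.isLt
  omega

lemma fpoly_eval {k : ℕ} (lam : Fin k → F) (x : F) :
    (fpoly lam).eval x = ∑ j : Fin k, lam j * x ^ (j : ℕ) := by
  rw [fpoly, eval_finset_sum]
  exact Finset.sum_congr rfl fun j _ => by rw [eval_mul, eval_C, eval_pow, eval_X]

lemma fpoly_zero {k : ℕ} {lam : Fin k → F} (h : fpoly lam = 0) : lam = 0 := by
  funext j
  have h2 := fpoly_coeff lam j
  rw [h] at h2
  simpa using h2.symm

open Classical in
lemma card_eval_zero_le {f : F[X]} (hf : f ≠ 0) (ha : Function.Injective a) :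
    (Finset.univ.filter fun i => f.eval (a i) = 0).card ≤ f.natDegree := by
  classical
  calc (Finset.univ.filter fun i => f.eval (a i) = 0).card
      ≤ f.roots.toFinset.card := by
        apply Finset.card_le_card_of_injOn a
        · intro i hi
          rw [Finset.mem_coe, Finset.mem_filter] at hi
          rw [Finset.mem_coe, Multiset.mem_toFinset, mem_roots hf]
          exact hi.2
        · exact fun x _ y _ h => ha h
    _ ≤ Multiset.card f.roots := Multiset.toFinset_card_le _
    _ ≤ f.natDegree := f.card_roots'

end MDSLCD

namespace MDSLCD

open Polynomial Finset

open Classical in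
theorem construction {F : Type*} [Field F] {n k : ℕ} (hk1 : 1 ≤ k) (hk2 : k ≤ n)
    (a : Fin n → F) (ha : Function.Injective a)
    (v : Fin n → F) (hv : ∀ i, v i ≠ 0)
    (hvu : ∀ i, v i * v i = lw a i * a i ^ (n - k)) :
    ∃ C : Submodule F (Fin n → F),
      Module.finrank F C = k ∧ IsLCD C ∧ hasMinDist C (n - k + 1) := by
  classical
  have hn1 : 1 ≤ n := le_trans hk1 hk2
  set G : Matrix (Fin k) (Fin n) F := Matrix.of fun (j : Fin k) (i : Fin n) =>
    v i * a i ^ (j : ℕ) with hG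
  have hvm : ∀ (lam : Fin k → F) (i : Fin n),
      Matrix.vecMul lam G i = v i * (fpoly lam).eval (a i) := by
    intro lam i
    rw [fpoly_eval]
    simp only [Matrix.vecMul, dotProduct, hG, Matrix.of_apply]
    rw [Finset.mul_sum]
    exact Finset.sum_congr rfl fun j _ => by ring
  have hlam0 : ∀ lam : Fin k → F, Matrix.vecMul lam G = 0 → lam = 0 := by
    intro lam h0
    apply fpoly_zero (lam := lam)
    apply Polynomial.eq_zero_of_natDegree_lt_card_of_eval_eq_zero _ ha
    · intro i
      have h1 := congrFun h0 i
      rw [hvm] at h1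
      simp only [Pi.zero_apply] at h1
      exact (mul_eq_zero.mp h1).resolve_left (hv i)
    · rw [Fintype.card_fin]
      have := fpoly_deg lam
      omega
  have hinj : Function.Injective G.vecMulLinear := by
    rw [← LinearMap.ker_eq_bot, LinearMap.ker_eq_bot']
    intro lam h
    exact hlam0 lam h
  -- weight computation
  have hwteq : ∀ lam : Fin k → F,
      wt (Matrix.vecMul lam G) =
        n - (Finset.univ.filter fun i => (fpoly lam).eval (a i) = 0).card := by
    intro lam
    have hfe : (Finset.univ.filter fun i => Matrix.vecMul lam G i ≠ 0) =
        (Finset.univ.filter fun i => ¬ (fpoly lam).eval (a i) = 0) :=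
      Finset.filter_congr fun i _ => by rw [ne_eq, hvm]; simp [hv i]
    rw [wt, hfe, Finset.filter_not, Finset.card_sdiff_of_subset (Finset.filter_subset _ _),
      Finset.card_univ, Fintype.card_fin]
  have hwt : ∀ lam : Fin k → F, lam ≠ 0 → n - k + 1 ≤ wt (Matrix.vecMul lam G) := by
    intro lam hlam
    have hf : fpoly lam ≠ 0 := fun h => hlam (fpoly_zero h)
    have hZ : (Finset.univ.filter fun i => (fpoly lam).eval (a i) = 0).card ≤ k - 1 :=
      le_trans (card_eval_zero_le hf ha) (fpoly_deg lam)
    have hZn : (Finset.univ.filter fun i => (fpoly lam).eval (a i) = 0).card ≤ n :=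
      le_trans (Finset.card_filter_le _ _) (by simp)
    rw [hwteq]
    omega
  -- the minimum-weight codeword
  have hkn : k - 1 ≤ n := by omega
  set g : F[X] := ∏ j : Fin (k-1), (X - Polynomial.C (a (Fin.castLE hkn j))) with hg
  have hgmonic : g.Monic := monic_prod_of_monic _ _ fun j _ => monic_X_sub_C _
  have hgdeg : g.natDegree = k - 1 := by
    rw [hg, natDegree_prod _ _ fun j _ => X_sub_C_ne_zero _]
    simp [natDegree_X_sub_C]
  set lam0 : Fin k → F := fun j => g.coeff (j : ℕ) with hlam0def
  have hfg : fpoly lam0 = g := by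
    rw [fpoly]
    simp only [hlam0def, C_mul_X_pow_eq_monomial]
    rw [Fin.sum_univ_eq_sum_range (fun j => (Polynomial.monomial j) (g.coeff j))]
    exact (Polynomial.as_sum_range' g k (by omega)).symm
  have hgz : ∀ i : Fin n, g.eval (a i) = 0 ↔ (i : ℕ) < k - 1 := by
    intro i
    rw [hg, eval_prod]
    rw [Finset.prod_eq_zero_iff]
    constructor
    · rintro ⟨j, -, hj⟩
      simp only [eval_sub, eval_X, eval_C] at hj
      have h2 : i = Fin.castLE hkn j := ha (sub_eq_zero.mp hj)
      have := j.isLt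
      rw [h2]
      exact this
    · intro hik
      refine ⟨⟨(i : ℕ), hik⟩, Finset.mem_univ _, ?_⟩
      have h2 : Fin.castLE hkn ⟨(i : ℕ), hik⟩ = i := Fin.ext rfl
      rw [h2]
      simp
  have hcard : (Finset.univ.filter fun i : Fin n => (i : ℕ) < k - 1).card = k - 1 := by
    have hmap : (Finset.univ.filter fun i : Fin n => (i : ℕ) < k - 1) =
        Finset.map ⟨Fin.castLE hkn, Fin.castLE_injective hkn⟩ Finset.univ := by
      ext i
      simp only [Finset.mem_filter, Finset.mem_univ, true_and, Finset.mem_map,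
        Function.Embedding.coeFn_mk]
      constructor
      · intro hik
        exact ⟨⟨(i : ℕ), hik⟩, Fin.ext rfl⟩
      · rintro ⟨j, rfl⟩
        exact j.isLt
    rw [hmap, Finset.card_map, Finset.card_univ, Fintype.card_fin]
  have hc0wt : wt (Matrix.vecMul lam0 G) = n - k + 1 := by
    rw [hwteq, hfg]
    have : (Finset.univ.filter fun i => g.eval (a i) = 0) =
        (Finset.univ.filter fun i : Fin n => (i : ℕ) < k - 1) :=
      Finset.filter_congr fun i _ => by rw [hgz i]
    rw [this, hcard]
    omega
  have hc0ne : Matrix.vecMul lam0 G ≠ 0 := by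
    intro h0
    have h1 := congrFun h0 ⟨n - 1, by omega⟩
    rw [hvm, hfg] at h1
    simp only [Pi.zero_apply] at h1
    rcases mul_eq_zero.mp h1 with h2 | h2
    · exact hv _ h2
    · rw [hgz] at h2
      simp only at h2
      omega
  -- the dual pairing matrix
  set M : Matrix (Fin k) (Fin k) F := G * G.transpose with hM
  have hMval : ∀ j l : Fin k, ((j : ℕ) + (l : ℕ) ≤ k - 1) →
      M j l = if (j : ℕ) + (l : ℕ) = k - 1 then 1 else 0 := by
    intro j l hjl
    rw [hM, Matrix.mul_apply]
    have hterm : ∀ i, G j i * G.transpose i l =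
        lw a i * a i ^ (n - k + ((j : ℕ) + (l : ℕ))) := by
      intro i
      rw [Matrix.transpose_apply]
      simp only [hG, Matrix.of_apply]
      rw [pow_add, pow_add]
      calc v i * a i ^ (j : ℕ) * (v i * a i ^ (l : ℕ))
          = v i * v i * (a i ^ (j : ℕ) * a i ^ (l : ℕ)) := by ring
        _ = lw a i * a i ^ (n - k) * (a i ^ (j : ℕ) * a i ^ (l : ℕ)) := by rw [hvu i]
        _ = lw a i * (a i ^ (n - k) * (a i ^ (j : ℕ) * a i ^ (l : ℕ))) := by ring
    rw [Finset.sum_congr rfl fun i _ => hterm i]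
    rw [moment ha hn1 (by omega)]
    exact if_congr (by omega) rfl rfl
  have hdet : M.det ≠ 0 := by
    have hBT : (M.submatrix (Fin.revPerm : Equiv.Perm (Fin k)) id).BlockTriangular id := by
      intro x y hxy
      rw [Matrix.submatrix_apply]
      simp only [id_eq] at hxy ⊢
      have hx := x.isLt
      have hy : (y : ℕ) < (x : ℕ) := hxy
      have hrev : ((Fin.revPerm x : Fin k) : ℕ) = k - ((x : ℕ) + 1) := by
        rw [Fin.revPerm_apply, Fin.val_rev]
      rw [hMval _ _ (by omega), if_neg (by omega)]
    have hdet1 : (M.submatrix (Fin.revPerm : Equiv.Perm (Fin k)) id).det = 1 := by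
      rw [Matrix.det_of_upperTriangular hBT]
      refine Finset.prod_eq_one fun j _ => ?_
      rw [Matrix.submatrix_apply]
      have hj := j.isLt
      have hrev : ((Fin.revPerm j : Fin k) : ℕ) = k - ((j : ℕ) + 1) := by
        rw [Fin.revPerm_apply, Fin.val_rev]
      simp only [id_eq]
      rw [hMval _ _ (by omega), if_pos (by omega)]
    have hperm := Matrix.det_permute (Fin.revPerm : Equiv.Perm (Fin k)) M
    rw [hdet1] at hperm
    intro h0
    rw [h0, mul_zero] at hperm
    exact one_ne_zero hperm
  have hunit : IsUnit M.det := isUnit_iff_ne_zero.mpr hdet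
  refine ⟨LinearMap.range G.vecMulLinear, ?_, ?_, ?_, ?_⟩
  · rw [LinearMap.finrank_range_of_inj hinj, Module.finrank_fin_fun]
  · -- LCD
    rw [IsLCD, eq_bot_iff]
    intro x hx
    rw [Submodule.mem_inf] at hx
    obtain ⟨hxC, hxD⟩ := hx
    obtain ⟨lam, rfl⟩ := LinearMap.mem_range.mp hxC
    rw [Submodule.mem_bot]
    have hrow : ∀ l : Fin k, (G l : Fin n → F) ∈ LinearMap.range G.vecMulLinear := by
      intro l
      refine ⟨Pi.single l 1, ?_⟩
      funext i
      rw [Matrix.vecMulLinear_apply]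
      simp only [Matrix.vecMul, dotProduct]
      rw [Finset.sum_eq_single l]
      · simp
      · intro b _ hb
        simp [Pi.single_apply, hb]
      · simp
    have hMrow : Matrix.vecMul lam M = 0 := by
      funext l
      have hd : ∑ i, (G.vecMulLinear lam) i * (G l) i = 0 := hxD (G l) (hrow l)
      have expand : ∑ i, (G.vecMulLinear lam) i * (G l) i = ∑ j, lam j * M j l := by
        simp only [Matrix.vecMulLinear_apply, Matrix.vecMul, dotProduct,
          Finset.sum_mul]
        rw [Finset.sum_comm]
        refine Finset.sum_congr rfl fun j _ => ?_
        rw [hM, Matrix.mul_apply, Finset.mul_sum]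
        refine Finset.sum_congr rfl fun i _ => ?_
        rw [Matrix.transpose_apply]
        ring
      have : Matrix.vecMul lam M l = ∑ j, lam j * M j l := rfl
      rw [this, ← expand, hd]
      rfl
    have hlamz : lam = 0 := by
      have h1 : Matrix.vecMul lam (M * M⁻¹) = lam := by
        rw [Matrix.mul_nonsing_inv M hunit, Matrix.vecMul_one]
      rw [← Matrix.vecMul_vecMul, hMrow, Matrix.zero_vecMul] at h1
      exact h1.symm
    rw [hlamz, map_zero]
  · exact ⟨Matrix.vecMul lam0 G, LinearMap.mem_range.mpr ⟨lam0, rfl⟩, hc0ne, hc0wt⟩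
  · intro c hc hcne
    obtain ⟨lam, rfl⟩ := LinearMap.mem_range.mp hc
    have hlamne : lam ≠ 0 := by
      intro h
      rw [h, map_zero] at hcne
      exact hcne rfl
    exact hwt lam hlamne

end MDSLCD

open Polynomial Finset MDSLCD in
/-- For any odd prime power `q = r^2` which is a perfect square, and any `n` with
`2n ≤ r`, for every `1 ≤ k ≤ n` there exists an MDS LCD `[n, k]` code over `F_q`. -/
theorem exists_mds_lcd_square {F : Type*} [Field F] [Fintype F] {r n k : ℕ}
    (hodd : Odd (Fintype.card F))
    (hq : Fintype.card F = r ^ 2)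
    (hn : 2 * n ≤ r) (hk1 : 1 ≤ k) (hk2 : k ≤ n) :
    ∃ C : Submodule F (Fin n → F),
      Module.finrank F C = k ∧ IsLCD C ∧ hasMinDist C (n - k + 1) := by
  classical
  have hn1 : 1 ≤ n := le_trans hk1 hk2
  have hr2 : 2 ≤ r := by omega
  set p := ringChar F with hp
  haveI : CharP F p := ringChar.charP F
  have hpprime : p.Prime := CharP.char_is_prime F p
  haveI : Fact p.Prime := ⟨hpprime⟩
  obtain ⟨m, -, hcard⟩ := FiniteField.card F p
  have hrdvd : r ∣ p ^ (m : ℕ) := by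
    rw [← hcard, hq]
    exact dvd_pow_self r two_ne_zero
  obtain ⟨e, hem, hre⟩ := (Nat.dvd_prime_pow hpprime).mp hrdvd
  have hfrobadd : ∀ x y : F, (x + y) ^ r = x ^ r + y ^ r := by
    intro x y; rw [hre]; exact add_pow_char_pow x y p e
  have hfrobsub : ∀ x y : F, (x - y) ^ r = x ^ r - y ^ r := by
    intro x y; rw [hre]; exact sub_pow_char_pow x y e (p := p)
  have hpow_q : ∀ x : F, (x ^ r) ^ r = x := by
    intro x
    rw [← pow_mul]
    have hrr : r * r = Fintype.card F := by rw [hq]; ring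
    rw [hrr]
    exact FiniteField.pow_card x
  have hpodd : p ≠ 2 := by
    intro h2
    rw [hcard, h2] at hodd
    exact (Nat.not_odd_iff_even.mpr (Nat.even_pow.mpr ⟨even_two, m.pos.ne'⟩)) hodd
  have hchar2 : ringChar F ≠ 2 := by rw [← hp]; exact hpodd
  have h2ne : (2 : F) ≠ 0 := by
    intro h
    have h2 : p ∣ 2 := (CharP.cast_eq_zero_iff F p 2).mp (by exact_mod_cast h)
    exact hpodd ((Nat.prime_dvd_prime_iff_eq hpprime Nat.prime_two).mp h2)
  have hrodd : Odd r := by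
    rcases Nat.even_or_odd r with h | h
    · exfalso
      rw [hq] at hodd
      exact (Nat.not_odd_iff_even.mpr (Nat.even_pow.mpr ⟨h, two_ne_zero⟩)) hodd
    · exact h
  -- the set of fixed points of x ↦ x ^ r and antifixed points
  set S : Finset F := Finset.univ.filter (fun x => x ^ r = x) with hS
  set T : Finset F := Finset.univ.filter (fun x => x ^ r = -x) with hT
  have hcardS : S.card ≤ r := by
    have hdf : ((X : F[X]) ^ r - X).natDegree = r := by
      rw [natDegree_sub_eq_left_of_natDegree_lt, natDegree_X_pow]
      rw [natDegree_X_pow, natDegree_X]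
      omega
    have hfne : ((X : F[X]) ^ r - X) ≠ 0 := by
      intro h0
      rw [h0, natDegree_zero] at hdf
      omega
    calc S.card ≤ ((X : F[X]) ^ r - X).roots.toFinset.card := by
          apply Finset.card_le_card
          intro x hx
          rw [hS, Finset.mem_filter] at hx
          rw [Multiset.mem_toFinset, mem_roots hfne, IsRoot.def, eval_sub, eval_pow, eval_X,
            hx.2, sub_self]
      _ ≤ Multiset.card ((X : F[X]) ^ r - X).roots := Multiset.toFinset_card_le _
      _ ≤ ((X : F[X]) ^ r - X).natDegree := card_roots' _
      _ = r := hdf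
  have hcardT : T.card ≤ r := by
    have hdf : ((X : F[X]) ^ r + X).natDegree = r := by
      rw [natDegree_add_eq_left_of_natDegree_lt, natDegree_X_pow]
      rw [natDegree_X_pow, natDegree_X]
      omega
    have hfne : ((X : F[X]) ^ r + X) ≠ 0 := by
      intro h0
      rw [h0, natDegree_zero] at hdf
      omega
    calc T.card ≤ ((X : F[X]) ^ r + X).roots.toFinset.card := by
          apply Finset.card_le_card
          intro x hx
          rw [hT, Finset.mem_filter] at hx
          rw [Multiset.mem_toFinset, mem_roots hfne, IsRoot.def, eval_add, eval_pow, eval_X,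
            hx.2, neg_add_cancel]
      _ ≤ Multiset.card ((X : F[X]) ^ r + X).roots := Multiset.toFinset_card_le _
      _ ≤ ((X : F[X]) ^ r + X).natDegree := card_roots' _
      _ = r := hdf
  have hsplit : ∀ z : F, (z + z ^ r) / 2 + (z - z ^ r) / 2 = z := by
    intro z
    field_simp
    ring
  have hinj2 : Function.Injective
      (fun x : F => (((x + x ^ r) / 2 : F), ((x - x ^ r) / 2 : F))) := by
    intro x y hxy
    have h1 := congrArg Prod.fst hxy
    have h2 := congrArg Prod.snd hxy
    simp only at h1 h2
    have h3 : (x + x ^ r) / 2 + (x - x ^ r) / 2 = (y + y ^ r) / 2 + (y - y ^ r) / 2 := by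
      rw [h1, h2]
    rwa [hsplit, hsplit] at h3
  have h2r : (2 : F) ^ r = 2 := by
    have h := hfrobadd 1 1
    norm_num at h
    exact h
  have himg : ∀ x : F, (((x + x ^ r) / 2 : F), ((x - x ^ r) / 2 : F)) ∈ S ×ˢ T := by
    intro x
    rw [Finset.mem_product, hS, hT, Finset.mem_filter, Finset.mem_filter]
    refine ⟨⟨Finset.mem_univ _, ?_⟩, Finset.mem_univ _, ?_⟩
    · rw [div_pow, h2r, hfrobadd, hpow_q, add_comm]
    · rw [div_pow, h2r, hfrobsub, hpow_q, ← neg_div, neg_sub]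
  have hcards : Fintype.card F ≤ S.card * T.card := by
    calc Fintype.card F
        = (Finset.univ.image
            (fun x : F => (((x + x ^ r) / 2 : F), ((x - x ^ r) / 2 : F)))).card := by
          rw [Finset.card_image_of_injective _ hinj2, Finset.card_univ]
      _ ≤ (S ×ˢ T).card := by
          apply Finset.card_le_card
          intro z hz
          rw [Finset.mem_image] at hz
          obtain ⟨x, -, rfl⟩ := hz
          exact himg x
      _ = S.card * T.card := Finset.card_product S T
  have hSr : r ≤ S.card := by
    have h1 : r * r ≤ S.card * r := by
      calc r * r = Fintype.card F := by rw [hq]; ring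
        _ ≤ S.card * T.card := hcards
        _ ≤ S.card * r := Nat.mul_le_mul_left _ hcardT
    exact Nat.le_of_mul_le_mul_right h1 (by omega)
  have h0S : (0 : F) ∈ S := by
    rw [hS, Finset.mem_filter]
    exact ⟨Finset.mem_univ _, by rw [zero_pow (by omega : r ≠ 0)]⟩
  have hS0 : n ≤ (S.erase 0).card := by
    rw [Finset.card_erase_of_mem h0S]
    omega
  obtain ⟨A, hAsub, hAcard⟩ := Finset.exists_subset_card_eq hS0
  set a : Fin n → F := fun i => ((A.equivFin.symm (Fin.cast hAcard.symm i)) : F) with hadef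
  have hamem : ∀ i, a i ∈ A := fun i => (A.equivFin.symm _).2
  have hainj : Function.Injective a := by
    intro i j hij
    have h2 := Subtype.coe_injective hij
    have h3 := A.equivFin.symm.injective h2
    exact Fin.ext (by simpa using congrArg Fin.val h3)
  have haS : ∀ i, a i ≠ 0 ∧ (a i) ^ r = a i := by
    intro i
    have h1 := hAsub (hamem i)
    rw [Finset.mem_erase, hS, Finset.mem_filter] at h1
    exact ⟨h1.1, h1.2.2⟩
  -- the weights are fixed by x ↦ x ^ r, hence squares
  have hsq : ∀ w : F, w ≠ 0 → w ^ r = w → IsSquare w := by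
    intro w hw hwr
    have hw1 : w ^ (r - 1) = 1 := by
      have h1 : w ^ (r - 1) * w = 1 * w := by
        rw [← pow_succ, Nat.sub_add_cancel (by omega), hwr, one_mul]
      exact mul_right_cancel₀ hw h1
    obtain ⟨c, hc⟩ := hrodd
    have hhalf : Fintype.card F / 2 = (r - 1) * ((r + 1) / 2) := by
      have h1 : r ^ 2 = 2 * (2 * c * c + 2 * c) + 1 := by rw [hc]; ring
      have h2 : (r - 1) * ((r + 1) / 2) = 2 * c * c + 2 * c := by
        have h3 : (r + 1) / 2 = c + 1 := by omega
        have h4 : r - 1 = 2 * c := by omega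
        rw [h3, h4]
        ring
      rw [hq, h1, h2]
      omega
    rw [FiniteField.isSquare_iff hchar2 hw, hhalf, pow_mul, hw1, one_pow]
  have hwfix : ∀ i, IsSquare (lw a i * a i ^ (n - k)) := by
    intro i
    apply hsq
    · exact mul_ne_zero (lw_ne_zero hainj i) (pow_ne_zero _ (haS i).1)
    · rw [mul_pow]
      have hlwfix : (lw a i) ^ r = lw a i := by
        have hpr : ∏ j ∈ Finset.univ.erase i, (a i - a j) ^ r
            = ∏ j ∈ Finset.univ.erase i, (a i - a j) :=
          Finset.prod_congr rfl fun j _ => by rw [hfrobsub, (haS i).2, (haS j).2]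
        rw [lw, inv_pow, ← Finset.prod_pow, hpr]
      have hafix : (a i ^ (n - k)) ^ r = a i ^ (n - k) := by
        rw [pow_right_comm, (haS i).2]
      rw [hlwfix, hafix]
  have hchoice : ∀ i, ∃ b : F, lw a i * a i ^ (n - k) = b * b := fun i => (hwfix i)
  choose v hv using hchoice
  have hvne : ∀ i, v i ≠ 0 := by
    intro i h0
    have h1 := hv i
    rw [h0, mul_zero] at h1
    exact mul_ne_zero (lw_ne_zero hainj i) (pow_ne_zero _ (haS i).1) h1
  exact MDSLCD.construction hk1 hk2 a hainj v hvne (fun i => (hv i).symm)
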